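/- For every 2-coloring of K_{m,n} there exist two distinct vertices in different classes joined by at most mn/4 alternating paths of length 3; that is, λ₃(m,n) ≤ mn/4. -/

import Mathlib

open Finset

-- auxiliary: 4ab ≤ (a+b)^2 in ℕ
lemma aux_four_mul (a b : ℕ) : 4 * (a * b) ≤ (a + b)^2 := by
  have h : (4:ℤ) * (a*b) ≤ ((a:ℤ)+b)^2 := by nlinarith [sq_nonneg ((a:ℤ)-(b:ℤ))]
  exact_mod_cast h

-- indicator product
lemma aux_ind (P Q : Prop) [Decidable P] [Decidable Q] :
    (if P ∧ Q then (1:ℕ) else 0) = (if P then 1 else 0) * (if Q then 1 else 0) := by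
  by_cases P <;> by_cases Q <;> simp [*]

theorem stmt12 (m n : ℕ) (hm : 1 ≤ m) (hn : 1 ≤ n) (c : Fin m → Fin n → Bool) :
    ∃ (v : Fin m) (x : Fin n),
      ((Finset.univ.filter (fun q : Fin m × Fin n =>
          q.1 ≠ v ∧ q.2 ≠ x ∧ c q.1 x ≠ c q.1 q.2 ∧ c q.1 q.2 ≠ c v q.2)).card : ℚ)
        ≤ (m : ℚ) * n / 4 := by
  classical
  set cnt : Fin m × Fin n → ℕ := fun p =>
    (Finset.univ.filter (fun q : Fin m × Fin n =>
        q.1 ≠ p.1 ∧ q.2 ≠ p.2 ∧ c q.1 p.2 ≠ c q.1 q.2 ∧ c q.1 q.2 ≠ c p.1 q.2)).card with hcnt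
  -- A u y = number of x with c u x ≠ c u y ; B u y = number of v with c u y ≠ c v y
  set A : Fin m → Fin n → ℕ := fun u y => (univ.filter fun x => c u x ≠ c u y).card with hA
  set B : Fin m → Fin n → ℕ := fun u y => (univ.filter fun v => c u y ≠ c v y).card with hB
  -- total sum equals sum of A*B
  have hS : ∑ p : Fin m × Fin n, cnt p = ∑ u : Fin m, ∑ y : Fin n, A u y * B u y := by
    have h1 : ∀ p : Fin m × Fin n, cnt p =
        ∑ u : Fin m, ∑ y : Fin n,
          (if c u p.2 ≠ c u y then (1:ℕ) else 0) * (if c u y ≠ c p.1 y then 1 else 0) := by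
      intro p
      rw [hcnt]
      dsimp only
      rw [card_filter]
      rw [Fintype.sum_prod_type]
      refine Finset.sum_congr rfl fun u _ => Finset.sum_congr rfl fun y _ => ?_
      rw [← aux_ind]
      congr 1
      apply propext
      constructor
      · rintro ⟨_, _, h3, h4⟩; exact ⟨h3, h4⟩
      · rintro ⟨h3, h4⟩
        refine ⟨?_, ?_, h3, h4⟩
        · rintro rfl; exact h4 rfl
        · rintro rfl; exact h3 rfl
    calc ∑ p : Fin m × Fin n, cnt p
        = ∑ p : Fin m × Fin n, ∑ q : Fin m × Fin n,
            (if c q.1 p.2 ≠ c q.1 q.2 then (1:ℕ) else 0) *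
            (if c q.1 q.2 ≠ c p.1 q.2 then 1 else 0) := by
          refine Finset.sum_congr rfl fun p _ => ?_
          rw [h1 p, Fintype.sum_prod_type]
      _ = ∑ q : Fin m × Fin n, ∑ p : Fin m × Fin n,
            (if c q.1 p.2 ≠ c q.1 q.2 then (1:ℕ) else 0) *
            (if c q.1 q.2 ≠ c p.1 q.2 then 1 else 0) := Finset.sum_comm
      _ = ∑ u : Fin m, ∑ y : Fin n, A u y * B u y := by
          rw [Fintype.sum_prod_type]
          refine Finset.sum_congr rfl fun u _ => Finset.sum_congr rfl fun y _ => ?_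
          rw [Fintype.sum_prod_type]
          have : ∀ v : Fin m, ∑ x : Fin n,
              (if c u x ≠ c u y then (1:ℕ) else 0) * (if c u y ≠ c v y then 1 else 0)
              = A u y * (if c u y ≠ c v y then 1 else 0) := by
            intro v
            rw [← Finset.sum_mul]
            congr 1
            rw [hA]; simp [card_filter]
          rw [Finset.sum_congr rfl fun v _ => this v, ← Finset.mul_sum]
          congr 1
          rw [hB]; simp [card_filter]
  -- row bound: 4 * sum of A^2 over a row ≤ n^3
  have hrow : ∀ u : Fin m, 4 * ∑ y : Fin n, (A u y)^2 ≤ n^3 := by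
    intro u
    set Nt : ℕ := (univ.filter fun x : Fin n => c u x = true).card with hNt
    set Nf : ℕ := (univ.filter fun x : Fin n => c u x = false).card with hNf
    have hsum : Nt + Nf = n := by
      have h := Finset.card_filter_add_card_filter_not
        (s := (univ : Finset (Fin n))) (p := fun x => c u x = true)
      simpa [hNt, hNf, Bool.not_eq_true, Finset.card_univ] using h
    have hAy : ∀ y : Fin n, A u y = if c u y = true then Nf else Nt := by
      intro y
      rw [hA]
      dsimp only
      cases hy : c u y <;> simp [hy, hNt, hNf]
    calc 4 * ∑ y : Fin n, (A u y)^2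
        = 4 * (Nt * Nf^2 + Nf * Nt^2) := by
          congr 1
          rw [Finset.sum_congr rfl fun y _ => by
            rw [hAy y, apply_ite (fun t : ℕ => t^2)]]
          rw [Finset.sum_ite]
          have e : Finset.filter (fun y : Fin n => ¬ (c u y = true)) univ
              = Finset.filter (fun y => c u y = false) univ :=
            Finset.filter_congr (fun y _ => by cases h : c u y <;> simp [h])
          rw [e]
          simp [← hNt, ← hNf, mul_comm]
      _ = (4 * (Nt * Nf)) * (Nt + Nf) := by ring
      _ ≤ (Nt + Nf)^2 * (Nt + Nf) := Nat.mul_le_mul_right _ (aux_four_mul Nt Nf)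
      _ = n^3 := by rw [hsum]; ring
  -- column bound: 4 * sum of B^2 over a column ≤ m^3
  have hcol : ∀ y : Fin n, 4 * ∑ u : Fin m, (B u y)^2 ≤ m^3 := by
    intro y
    set Mt : ℕ := (univ.filter fun v : Fin m => c v y = true).card with hMt
    set Mf : ℕ := (univ.filter fun v : Fin m => c v y = false).card with hMf
    have hsum : Mt + Mf = m := by
      have h := Finset.card_filter_add_card_filter_not
        (s := (univ : Finset (Fin m))) (p := fun v => c v y = true)
      simpa [hMt, hMf, Bool.not_eq_true, Finset.card_univ] using h
    have hBy : ∀ u : Fin m, B u y = if c u y = true then Mf else Mt := by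
      intro u
      rw [hB]
      dsimp only
      cases hy : c u y
      · have e : Finset.filter (fun v : Fin m => (false:Bool) ≠ c v y) univ
            = Finset.filter (fun v => c v y = true) univ :=
          Finset.filter_congr (fun v _ => by cases h : c v y <;> simp [h])
        simp only [hy, e, if_neg (by simp : ¬ (false = true))]
        rfl
      · have e : Finset.filter (fun v : Fin m => (true:Bool) ≠ c v y) univ
            = Finset.filter (fun v => c v y = false) univ :=
          Finset.filter_congr (fun v _ => by cases h : c v y <;> simp [h])
        simp only [hy, e, if_pos rfl]
        simp
        rfl
    calc 4 * ∑ u : Fin m, (B u y)^2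
        = 4 * (Mt * Mf^2 + Mf * Mt^2) := by
          congr 1
          rw [Finset.sum_congr rfl fun u _ => by
            rw [hBy u, apply_ite (fun t : ℕ => t^2)]]
          rw [Finset.sum_ite]
          have e : Finset.filter (fun u : Fin m => ¬ (c u y = true)) univ
              = Finset.filter (fun u => c u y = false) univ :=
            Finset.filter_congr (fun u _ => by cases h : c u y <;> simp [h])
          rw [e]
          simp [← hMt, ← hMf, mul_comm]
      _ = (4 * (Mt * Mf)) * (Mt + Mf) := by ring
      _ ≤ (Mt + Mf)^2 * (Mt + Mf) := Nat.mul_le_mul_right _ (aux_four_mul Mt Mf)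
      _ = m^3 := by rw [hsum]; ring
  have hA2 : 4 * ∑ u : Fin m, ∑ y : Fin n, (A u y)^2 ≤ m * n^3 := by
    calc 4 * ∑ u : Fin m, ∑ y : Fin n, (A u y)^2
        = ∑ u : Fin m, 4 * ∑ y : Fin n, (A u y)^2 := by rw [Finset.mul_sum]
      _ ≤ ∑ _u : Fin m, n^3 := Finset.sum_le_sum fun u _ => hrow u
      _ = m * n^3 := by simp [mul_comm]
  have hB2 : 4 * ∑ u : Fin m, ∑ y : Fin n, (B u y)^2 ≤ n * m^3 := by
    rw [Finset.sum_comm]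
    calc 4 * ∑ y : Fin n, ∑ u : Fin m, (B u y)^2
        = ∑ y : Fin n, 4 * ∑ u : Fin m, (B u y)^2 := by rw [Finset.mul_sum]
      _ ≤ ∑ _y : Fin n, m^3 := Finset.sum_le_sum fun y _ => hcol y
      _ = n * m^3 := by simp [mul_comm]
  -- now work in ℚ
  set Sq : ℚ := ((∑ u : Fin m, ∑ y : Fin n, A u y * B u y : ℕ) : ℚ) with hSq
  have hSA4 : 4 * ((∑ u : Fin m, ∑ y : Fin n, (A u y)^2 : ℕ) : ℚ) ≤ (m:ℚ) * (n:ℚ)^3 := by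
    exact_mod_cast hA2
  have hSB4 : 4 * ((∑ u : Fin m, ∑ y : Fin n, (B u y)^2 : ℕ) : ℚ) ≤ (n:ℚ) * (m:ℚ)^3 := by
    exact_mod_cast hB2
  have hk : 2 * ((m:ℚ) * n) * Sq ≤
      (m:ℚ)^2 * ((∑ u : Fin m, ∑ y : Fin n, (A u y)^2 : ℕ) : ℚ)
      + (n:ℚ)^2 * ((∑ u : Fin m, ∑ y : Fin n, (B u y)^2 : ℕ) : ℚ) := by
    rw [hSq]
    push_cast
    rw [Finset.mul_sum, Finset.mul_sum, Finset.mul_sum, ← Finset.sum_add_distrib]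
    refine Finset.sum_le_sum fun u _ => ?_
    rw [Finset.mul_sum, Finset.mul_sum, Finset.mul_sum, ← Finset.sum_add_distrib]
    refine Finset.sum_le_sum fun y _ => ?_
    nlinarith [sq_nonneg ((m:ℚ) * (A u y : ℚ) - (n:ℚ) * (B u y : ℚ))]
  have hmq : (1:ℚ) ≤ (m:ℚ) := by exact_mod_cast hm
  have hnq : (1:ℚ) ≤ (n:ℚ) := by exact_mod_cast hn
  have hSqle : Sq ≤ (m:ℚ)^2 * (n:ℚ)^2 / 4 := by
    have hmn : (0:ℚ) < 2 * ((m:ℚ) * n) := by nlinarith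
    have h2 : Sq * (2 * ((m:ℚ) * n)) ≤ ((m:ℚ)^2 * (n:ℚ)^2 / 4) * (2 * ((m:ℚ) * n)) := by
      nlinarith [hk, mul_le_mul_of_nonneg_left hSA4 (by positivity : (0:ℚ) ≤ (m:ℚ)^2),
        mul_le_mul_of_nonneg_left hSB4 (by positivity : (0:ℚ) ≤ (n:ℚ)^2)]
    exact le_of_mul_le_mul_right h2 hmn
  -- pigeonhole
  have hne : (Finset.univ : Finset (Fin m × Fin n)).Nonempty := by
    refine ⟨(⟨0, hm⟩, ⟨0, hn⟩), Finset.mem_univ _⟩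
  have hfin : ∑ p : Fin m × Fin n, (cnt p : ℚ) ≤
      ∑ _p : Fin m × Fin n, (m:ℚ) * n / 4 := by
    have hl : ∑ p : Fin m × Fin n, (cnt p : ℚ) = Sq := by
      rw [hSq, ← hS]
      push_cast
      rfl
    have hr : ∑ _p : Fin m × Fin n, (m:ℚ) * n / 4 = (m:ℚ)^2 * (n:ℚ)^2 / 4 := by
      rw [Finset.sum_const, Finset.card_univ]
      simp [Fintype.card_prod]
      ring
    rw [hl, hr]
    exact hSqle
  obtain ⟨p, _, hple⟩ := Finset.exists_le_of_sum_le hne hfin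
  exact ⟨p.1, p.2, hple⟩
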